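/- In the proposed coding scheme over a degraded wiretap channel (W₂ ⪯ W₁), with message bits U_𝓐 = M, frozen bits U_𝓕 = 0, uniform random bits U_𝓡 independent of M, and shaping bits U_𝓓 determined by the other bits, suppose the conditional entropy bound H(U_𝓡 | Z, U_𝓐) ≤ h₂(c·2^{−N^{β′}}) + c·|𝓡|·2^{−N^{β′}} holds for a constant c > 0 and 0 < β′ < β < 1/2. Then the information leaked to Eve satisfies I(M; Z) ≤ N·I(X;Z) − |𝓡| + h₂(c·2^{−N^{β′}}) + c·|𝓡|·2^{−N^{β′}}, where (X,Z) is a single-letter input–output pair of W₂ with input distribution P_X. -/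

import Mathlib

open scoped BigOperators Classical
open Filter Topology

noncomputable section

namespace PolarWiretap

variable {Ω α γ 𝒱 : Type*}

/-- Probability mass assigned by the weight function `p` to the value `a`
of the random variable `X` (the distribution of `X`). -/
def dist [Fintype Ω] (p : Ω → ℝ) (X : Ω → α) (a : α) : ℝ :=
  ∑ ω, if X ω = a then p ω else 0

/-- Probability of the event `E` under the weight function `p`. -/
def pr [Fintype Ω] (p : Ω → ℝ) (E : Ω → Prop) : ℝ :=
  ∑ ω, if E ω then p ω else 0

/-- Shannon entropy (in bits) of the random variable `X` under `p`. -/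
def H [Fintype Ω] [Fintype α] (p : Ω → ℝ) (X : Ω → α) : ℝ :=
  ∑ a, -(dist p X a * Real.logb 2 (dist p X a))

/-- Conditional Shannon entropy `H(X|Y) = H(X,Y) − H(Y)` (in bits). -/
def condH [Fintype Ω] [Fintype α] [Fintype γ] (p : Ω → ℝ) (X : Ω → α) (Y : Ω → γ) : ℝ :=
  H p (fun ω => (X ω, Y ω)) - H p Y

/-- Mutual information `I(X;Y) = H(X) + H(Y) − H(X,Y)` (in bits). -/
def MI [Fintype Ω] [Fintype α] [Fintype γ] (p : Ω → ℝ) (X : Ω → α) (Y : Ω → γ) : ℝ :=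
  H p X + H p Y - H p (fun ω => (X ω, Y ω))

/-- Bhattacharyya parameter
`Z_B(T|V) = 2 ∑_v √(P_{T,V}(0,v) · P_{T,V}(1,v))` of a binary random variable `T`
given the side information `V`. -/
def ZB [Fintype Ω] [Fintype 𝒱] (p : Ω → ℝ) (T : Ω → ZMod 2) (V : Ω → 𝒱) : ℝ :=
  2 * ∑ v, Real.sqrt (dist p (fun ω => (T ω, V ω)) (0, v) *
      dist p (fun ω => (T ω, V ω)) (1, v))

/-- `p` is a probability mass function on the finite type `Ω`. -/
def IsPMF [Fintype Ω] (p : Ω → ℝ) : Prop := (∀ ω, 0 ≤ p ω) ∧ ∑ ω, p ω = 1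

/-- `W` is a (discrete memoryless) channel: a stochastic matrix. -/
def IsChannel {𝒳 𝒴 : Type*} [Fintype 𝒴] (W : 𝒳 → 𝒴 → ℝ) : Prop :=
  (∀ x y, 0 ≤ W x y) ∧ ∀ x, ∑ y, W x y = 1

/-- `W₂` is degraded with respect to `W₁` (`W₂ ⪯ W₁`): there is a channel `W̃`
with `W₂(z|x) = ∑_y W₁(y|x)·W̃(z|y)`. -/
def Degraded {𝒳 𝒴 𝒵 : Type*} [Fintype 𝒴] [Fintype 𝒵]
    (W₂ : 𝒳 → 𝒵 → ℝ) (W₁ : 𝒳 → 𝒴 → ℝ) : Prop :=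
  ∃ Wt : 𝒴 → 𝒵 → ℝ, IsChannel Wt ∧ ∀ x z, W₂ x z = ∑ y, W₁ x y * Wt y z

/-- The binary entropy function `h₂(x) = −x log₂ x − (1−x) log₂ (1−x)`. -/
def h2 (x : ℝ) : ℝ := -(x * Real.logb 2 x) - (1 - x) * Real.logb 2 (1 - x)

/-- The single-letter joint distribution of an input `X ~ P_X` and the output of
the channel `W` fed with `X`: `P(x,y) = P_X(x)·W(y|x)`. -/
def slP {𝒳 𝒴 : Type*} (PX : 𝒳 → ℝ) (W : 𝒳 → 𝒴 → ℝ) : 𝒳 × 𝒴 → ℝ :=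
  fun a => PX a.1 * W a.1 a.2


section Aux

variable {Ω : Type*} [Fintype Ω] (p : Ω → ℝ)

lemma sum_dist_mul {α : Type*} [Fintype α] (X : Ω → α) (f : α → ℝ) :
    ∑ a, dist p X a * f a = ∑ ω, p ω * f (X ω) := by
  simp only [dist, Finset.sum_mul]
  rw [Finset.sum_comm]
  refine Finset.sum_congr rfl fun ω _ => ?_
  simp [ite_mul]

lemma dist_nonneg' {α : Type*} (hp : ∀ ω, 0 ≤ p ω) (X : Ω → α) (a : α) :
    0 ≤ dist p X a := by
  refine Finset.sum_nonneg fun ω _ => ?_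
  split_ifs with h
  · exact hp ω
  · exact le_rfl

lemma sum_dist {α : Type*} [Fintype α] (X : Ω → α) :
    ∑ a, dist p X a = ∑ ω, p ω := by
  simpa using sum_dist_mul p X (fun _ => 1)

lemma le_dist_self {α : Type*} (hp : ∀ ω, 0 ≤ p ω) (X : Ω → α) (ω : Ω) :
    p ω ≤ dist p X (X ω) := by
  have h := Finset.single_le_sum (f := fun ω' => if X ω' = X ω then p ω' else 0)
    (fun i _ => by split_ifs; exacts [hp i, le_rfl]) (Finset.mem_univ ω)
  simpa [dist] using h

lemma H_eq {α : Type*} [Fintype α] (X : Ω → α) :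
    H p X = ∑ ω, p ω * (-(Real.logb 2 (dist p X (X ω)))) := by
  rw [H, ← sum_dist_mul p X (fun a => -(Real.logb 2 (dist p X a)))]
  exact Finset.sum_congr rfl fun a _ => by ring

lemma dist_comp_equiv {α β : Type*} (e : α ≃ β) (X : Ω → α) (b : β) :
    dist p (fun ω => e (X ω)) b = dist p X (e.symm b) := by
  refine Finset.sum_congr rfl fun ω _ => ?_
  simp [Equiv.apply_eq_iff_eq_symm_apply]

lemma H_comp_equiv {α β : Type*} [Fintype α] [Fintype β] (e : α ≃ β) (X : Ω → α) :
    H p (fun ω => e (X ω)) = H p X := by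
  unfold H
  refine (Fintype.sum_equiv e (fun a => -(dist p X a * Real.logb 2 (dist p X a)))
    (fun b => -(dist p (fun ω => e (X ω)) b * Real.logb 2 (dist p (fun ω => e (X ω)) b)))
    (fun a => ?_)).symm
  rw [dist_comp_equiv, e.symm_apply_apply]

lemma gibbs {α : Type*} [Fintype α] (q r : α → ℝ) (hq : ∀ a, 0 ≤ q a) (hr : ∀ a, 0 ≤ r a)
    (hq1 : ∑ a, q a = 1) (hr1 : ∑ a, r a ≤ 1) (hsupp : ∀ a, q a ≠ 0 → r a ≠ 0) :
    ∑ a, q a * Real.logb 2 (r a) ≤ ∑ a, q a * Real.logb 2 (q a) := by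
  have h2 : (0:ℝ) < Real.log 2 := Real.log_pos one_lt_two
  have key : ∀ a, q a * Real.logb 2 (r a) - q a * Real.logb 2 (q a)
      ≤ (r a - q a) / Real.log 2 := by
    intro a
    rcases eq_or_ne (q a) 0 with h | h
    · simp only [h, zero_mul, sub_zero, sub_self]
      exact div_nonneg (hr a) h2.le
    · have hqa : 0 < q a := (hq a).lt_of_ne (Ne.symm h)
      have hra : 0 < r a := (hr a).lt_of_ne (Ne.symm (hsupp a h))
      have hlog : Real.log (r a) - Real.log (q a) ≤ r a / q a - 1 := by
        have := Real.log_le_sub_one_of_pos (x := r a / q a) (by positivity)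
        rwa [Real.log_div hra.ne' hqa.ne'] at this
      have h3 : q a * (Real.log (r a) - Real.log (q a)) ≤ r a - q a := by
        have := mul_le_mul_of_nonneg_left hlog hqa.le
        calc q a * (Real.log (r a) - Real.log (q a)) ≤ q a * (r a / q a - 1) := this
          _ = r a - q a := by field_simp
      calc q a * Real.logb 2 (r a) - q a * Real.logb 2 (q a)
          = q a * (Real.log (r a) - Real.log (q a)) / Real.log 2 := by
            rw [Real.logb, Real.logb]; ring
        _ ≤ (r a - q a) / Real.log 2 := (div_le_div_iff_of_pos_right h2).mpr h3
  have hsum := Finset.sum_le_sum (fun a (_ : a ∈ Finset.univ) => key a)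
  rw [Finset.sum_sub_distrib] at hsum
  have heq : ∑ a, (r a - q a) / Real.log 2 = (∑ a, r a - 1) / Real.log 2 := by
    rw [← Finset.sum_div, Finset.sum_sub_distrib, hq1]
  rw [heq] at hsum
  have hle : (∑ a, r a - 1) / Real.log 2 ≤ 0 :=
    div_nonpos_iff.mpr (Or.inr ⟨by linarith, h2.le⟩)
  linarith

lemma dist_snd {α β : Type*} [Fintype α] (X : Ω → α) (Y : Ω → β) (b : β) :
    dist p Y b = ∑ a, dist p (fun ω => (X ω, Y ω)) (a, b) := by
  unfold dist
  rw [Finset.sum_comm]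
  refine Finset.sum_congr rfl fun ω _ => ?_
  by_cases h : Y ω = b <;> simp [h, Prod.ext_iff]

lemma mul_mul_logb (a b : ℝ) :
    a * b * Real.logb 2 (a * b) = a * b * Real.logb 2 a + a * b * Real.logb 2 b := by
  rcases eq_or_ne a 0 with h | h
  · simp [h]
  rcases eq_or_ne b 0 with h' | h'
  · simp [h']
  rw [Real.logb_mul h h']
  ring

lemma H_uniform {α : Type*} [Fintype α] (X : Ω → α) (k : ℕ)
    (hcard : Fintype.card α = 2 ^ k) (hd : ∀ a, dist p X a = ((2:ℝ) ^ k)⁻¹) :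
    H p X = k := by
  have hl : Real.logb 2 (((2:ℝ) ^ k)⁻¹) = -k := by
    rw [Real.logb_inv, Real.logb_pow, Real.logb_self_eq_one one_lt_two, mul_one]
  unfold H
  rw [Finset.sum_congr rfl (fun a _ => by rw [hd a, hl])]
  rw [Finset.sum_const, Finset.card_univ, hcard, nsmul_eq_mul]
  push_cast
  have h2k : ((2:ℝ) ^ k) ≠ 0 := by positivity
  field_simp

lemma sum_pi_ite {N : ℕ} {𝒵 : Type*} [Fintype 𝒵] (f : Fin N → 𝒵 → ℝ)
    (hf : ∀ j, ∑ y, f j y = 1) (i : Fin N) (a : 𝒵) :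
    ∑ z : Fin N → 𝒵, (if z i = a then ∏ j, f j (z j) else 0) = f i a := by
  classical
  set g : Fin N → 𝒵 → ℝ := fun j y => if j = i then (if y = a then f j y else 0) else f j y
    with hg
  have step1 : ∀ z : Fin N → 𝒵,
      (if z i = a then ∏ j, f j (z j) else 0) = ∏ j, g j (z j) := by
    intro z
    by_cases h : z i = a
    · rw [if_pos h]
      refine Finset.prod_congr rfl fun j _ => ?_
      by_cases hj : j = i
      · subst hj; simp [hg, h]
      · simp [hg, hj]
    · rw [if_neg h]
      exact (Finset.prod_eq_zero (Finset.mem_univ i) (by simp [hg, h])).symm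
  rw [Finset.sum_congr rfl fun z _ => step1 z, ← Fintype.prod_sum]
  rw [Finset.prod_eq_single i (fun j _ hj => by simp [hg, hj, hf j]) (by simp)]
  simp [hg]

lemma H_le_sum_H {N : ℕ} {𝒵 : Type*} [Fintype 𝒵] (hp : ∀ ω, 0 ≤ p ω)
    (hp1 : ∑ ω, p ω = 1) (Z : Ω → Fin N → 𝒵) :
    H p Z ≤ ∑ i, H p (fun ω => Z ω i) := by
  classical
  set q : (Fin N → 𝒵) → ℝ := dist p Z with hq
  set qi : Fin N → 𝒵 → ℝ := fun i a => dist p (fun ω => Z ω i) a with hqi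
  have hq0 : ∀ z, 0 ≤ q z := fun z => dist_nonneg' p hp Z z
  have hqi0 : ∀ i a, 0 ≤ qi i a := fun i a => dist_nonneg' p hp _ a
  have hq1 : ∑ z, q z = 1 := (sum_dist p Z).trans hp1
  have hqi1 : ∀ i, ∑ a, qi i a = 1 := fun i => (sum_dist p _).trans hp1
  set r : (Fin N → 𝒵) → ℝ := fun z => ∏ i, qi i (z i) with hr
  have hr0 : ∀ z, 0 ≤ r z := fun z => Finset.prod_nonneg fun i _ => hqi0 i (z i)
  have hr1 : ∑ z, r z = 1 := by
    rw [hr, ← Fintype.prod_sum]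
    simp [hqi1]
  have hdom : ∀ z i, q z ≤ qi i (z i) := by
    intro z i
    refine Finset.sum_le_sum fun ω _ => ?_
    by_cases h : Z ω = z
    · simp [h]
    · simp only [if_neg h]
      split_ifs
      exacts [hp ω, le_rfl]
  have hsupp : ∀ z, q z ≠ 0 → r z ≠ 0 := by
    intro z h
    have hqz : 0 < q z := (hq0 z).lt_of_ne (Ne.symm h)
    exact (Finset.prod_pos fun i _ => lt_of_lt_of_le hqz (hdom z i)).ne'
  have hgibbs := gibbs q r hq0 hr0 hq1 (le_of_eq hr1) hsupp
  have hsplit : ∀ z, q z * Real.logb 2 (r z) = ∑ i, q z * Real.logb 2 (qi i (z i)) := by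
    intro z
    rcases eq_or_ne (q z) 0 with h | h
    · simp [h]
    · have hqz : 0 < q z := (hq0 z).lt_of_ne (Ne.symm h)
      have hpos : ∀ i, qi i (z i) ≠ 0 := fun i => (lt_of_lt_of_le hqz (hdom z i)).ne'
      simp only [Real.logb, hr]
      rw [Real.log_prod (fun i _ => hpos i), Finset.sum_div, Finset.mul_sum]
  have hswap : ∑ z, ∑ i, q z * Real.logb 2 (qi i (z i))
      = ∑ i, ∑ a, qi i a * Real.logb 2 (qi i a) := by
    rw [Finset.sum_comm]
    refine Finset.sum_congr rfl fun i _ => ?_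
    rw [hq, sum_dist_mul p Z (fun z => Real.logb 2 (qi i (z i))),
      ← sum_dist_mul p (fun ω => Z ω i) (fun a => Real.logb 2 (qi i a))]
  have h3 : ∑ z, q z * Real.logb 2 (r z) = ∑ i, ∑ a, qi i a * Real.logb 2 (qi i a) := by
    rw [Finset.sum_congr rfl fun z _ => hsplit z, hswap]
  have h1 : H p Z = -∑ z, q z * Real.logb 2 (q z) := by
    unfold H
    rw [← Finset.sum_neg_distrib]
  have h2 : ∑ i, H p (fun ω => Z ω i) = -∑ i, ∑ a, qi i a * Real.logb 2 (qi i a) := by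
    unfold H
    rw [← Finset.sum_neg_distrib]
    refine Finset.sum_congr rfl fun i _ => ?_
    rw [← Finset.sum_neg_distrib]
  rw [h1, h2]
  rw [← h3]
  linarith

end Aux

/-- **Information-leakage bound for the proposed coding scheme.**
Over a degraded wiretap channel (`W₂ ⪯ W₁`), with message bits `U_𝓐 = M`
uniform on `{0,1}^K`, frozen bits `U_𝓕 = 0`, uniform random bits `U_𝓡`
independent of `M`, shaping bits `U_𝓓` determined by the other bits, codeword
`X = enc(M, U_𝓡)` sent over `N = 2^n` memoryless uses of `W₂` (each `X_i`
marginally `∼ P_X`), and assuming the conditional-entropy bound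
`H(U_𝓡 | Z, M) ≤ h₂(c·2^{−N^{β′}}) + c·|𝓡|·2^{−N^{β′}}`
(`c > 0`, `0 < β′ < β < 1/2`), the leakage to Eve satisfies
`I(M; Z) ≤ N·I(X;Z) − |𝓡| + h₂(c·2^{−N^{β′}}) + c·|𝓡|·2^{−N^{β′}}`,
where `(X, Z) ∼ P_X(x)·W₂(z|x)` is a single-letter input–output pair. -/
theorem leakage_upper_bound {Ω 𝒳 𝒴 𝒵 : Type*} [Fintype Ω] [Fintype 𝒳]
    [Fintype 𝒴] [Fintype 𝒵] (p : Ω → ℝ) (hp : IsPMF p)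
    (K R F D n N : ℕ) (hN : N = 2 ^ n)
    (M : Ω → (Fin K → ZMod 2)) (UR : Ω → (Fin R → ZMod 2))
    (UF : Ω → (Fin F → ZMod 2)) (UD : Ω → (Fin D → ZMod 2))
    (X : Ω → Fin N → 𝒳) (Z : Ω → Fin N → 𝒵)
    (hM : ∀ m, dist p M m = ((2 : ℝ) ^ K)⁻¹)
    (hUR : ∀ r, dist p UR r = ((2 : ℝ) ^ R)⁻¹)
    (hind : ∀ m r, dist p (fun ω => (M ω, UR ω)) (m, r) = dist p M m * dist p UR r)
    (hUF : ∀ ω, UF ω = 0)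
    (g : (Fin K → ZMod 2) → (Fin R → ZMod 2) → (Fin D → ZMod 2))
    (hUD : ∀ ω, UD ω = g (M ω) (UR ω))
    (PX : 𝒳 → ℝ) (W₁ : 𝒳 → 𝒴 → ℝ) (W₂ : 𝒳 → 𝒵 → ℝ)
    (hPX : IsPMF PX) (hW₁ : IsChannel W₁) (hW₂ : IsChannel W₂)
    (hdeg : Degraded W₂ W₁)
    (enc : (Fin K → ZMod 2) → (Fin R → ZMod 2) → (Fin N → 𝒳))
    (hX : ∀ ω, X ω = enc (M ω) (UR ω))
    (hmem : ∀ m r z, dist p (fun ω => (M ω, UR ω, Z ω)) (m, r, z) =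
      dist p (fun ω => (M ω, UR ω)) (m, r) * ∏ i, W₂ (enc m r i) (z i))
    (hmarg : ∀ i x, dist p (fun ω => X ω i) x = PX x)
    (c β β' : ℝ) (hc : 0 < c) (hβ' : 0 < β') (hβ'β : β' < β) (hβ : β < 1 / 2)
    (hFano : condH p UR (fun ω => (Z ω, M ω)) ≤
      h2 (c * 2 ^ (-((N : ℝ) ^ β'))) + c * R * 2 ^ (-((N : ℝ) ^ β'))) :
    MI p M Z ≤ N * MI (slP PX W₂) Prod.fst Prod.snd - R +
      h2 (c * 2 ^ (-((N : ℝ) ^ β'))) + c * R * 2 ^ (-((N : ℝ) ^ β')) := by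

  classical
  obtain ⟨hp0, hp1⟩ := hp
  -- entropy of the uniform message and of (message, randomization) bits
  have hHM : H p M = K := H_uniform p M K (by simp) hM
  have hdMU : ∀ t : (Fin K → ZMod 2) × (Fin R → ZMod 2),
      dist p (fun ω => (M ω, UR ω)) t = ((2:ℝ) ^ (K + R))⁻¹ := by
    rintro ⟨m, r⟩
    rw [hind m r, hM m, hUR r, pow_add, mul_inv]
  have hHMU : H p (fun ω => (M ω, UR ω)) = ((K + R : ℕ) : ℝ) :=
    H_uniform p _ (K + R) (by simp [pow_add]) hdMU
  -- permutation identities for joint entropies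
  have hperm1 : H p (fun ω => (UR ω, (Z ω, M ω))) = H p (fun ω => ((M ω, UR ω), Z ω)) :=
    H_comp_equiv p
      (⟨fun x => (x.1.2, (x.2, x.1.1)), fun y => ((y.2.2, y.1), y.2.1),
        fun x => rfl, fun y => rfl⟩ :
        ((Fin K → ZMod 2) × (Fin R → ZMod 2)) × (Fin N → 𝒵) ≃
          (Fin R → ZMod 2) × ((Fin N → 𝒵) × (Fin K → ZMod 2)))
      (fun ω => ((M ω, UR ω), Z ω))
  have hperm2 : H p (fun ω => (Z ω, M ω)) = H p (fun ω => (M ω, Z ω)) :=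
    (H_comp_equiv p
      (⟨fun x => (x.2, x.1), fun y => (y.2, y.1), fun x => rfl, fun y => rfl⟩ :
        (Fin N → 𝒵) × (Fin K → ZMod 2) ≃ (Fin K → ZMod 2) × (Fin N → 𝒵))
      (fun ω => (Z ω, M ω))).symm
  have hperm3 : H p (fun ω => ((M ω, UR ω), Z ω)) = H p (fun ω => (M ω, (UR ω, Z ω))) :=
    (H_comp_equiv p
      (⟨fun x => (x.1.1, (x.1.2, x.2)), fun y => ((y.1, y.2.1), y.2.2),
        fun x => rfl, fun y => rfl⟩ :
        ((Fin K → ZMod 2) × (Fin R → ZMod 2)) × (Fin N → 𝒵) ≃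
          (Fin K → ZMod 2) × ((Fin R → ZMod 2) × (Fin N → 𝒵)))
      (fun ω => ((M ω, UR ω), Z ω))).symm
  -- chain-rule identity:  I(M;Z) = I(M,U_R;Z) - R + H(U_R | Z, M)
  have hR : H p (fun ω => (M ω, UR ω)) - H p M = R := by
    rw [hHM, hHMU]; push_cast; ring
  have hident : MI p M Z = MI p (fun ω => (M ω, UR ω)) Z - R +
      condH p UR (fun ω => (Z ω, M ω)) := by
    simp only [MI, condH]
    linarith [hperm1, hperm2]
  -- single-letter quantities
  set Csl : ℝ := ∑ x, ∑ z, -(PX x * W₂ x z * Real.logb 2 (W₂ x z)) with hCsl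
  have hdist_pair_sl : ∀ b : 𝒳 × 𝒵,
      dist (slP PX W₂) (fun a => (Prod.fst a, Prod.snd a)) b = slP PX W₂ b := by
    intro b
    unfold dist
    simp [Finset.sum_ite_eq']
  have hdist_fst : ∀ x, dist (slP PX W₂) Prod.fst x = PX x := by
    intro x
    unfold dist slP
    rw [Fintype.sum_prod_type]
    calc ∑ a, ∑ b, (if a = x then PX a * W₂ a b else 0)
        = ∑ a, (if a = x then PX a * ∑ b, W₂ a b else 0) := by
          refine Finset.sum_congr rfl fun a _ => ?_
          split_ifs with h
          · rw [Finset.mul_sum]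
          · simp
      _ = PX x := by simp [hW₂.2]
  have hdist_snd : ∀ z, dist (slP PX W₂) Prod.snd z = ∑ x, PX x * W₂ x z := by
    intro z
    unfold dist slP
    rw [Fintype.sum_prod_type]
    refine Finset.sum_congr rfl fun x _ => ?_
    simp [Finset.sum_ite_eq']
  have hHfst : H (slP PX W₂) Prod.fst = ∑ x, -(PX x * Real.logb 2 (PX x)) := by
    unfold H
    exact Finset.sum_congr rfl fun x _ => by rw [hdist_fst x]
  have hHpair_sl : H (slP PX W₂) (fun a => (Prod.fst a, Prod.snd a)) =
      H (slP PX W₂) Prod.fst + Csl := by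
    have e1 : H (slP PX W₂) (fun a => (Prod.fst a, Prod.snd a))
        = ∑ x, ∑ z, -(PX x * W₂ x z * Real.logb 2 (PX x * W₂ x z)) := by
      unfold H
      rw [Finset.sum_congr rfl fun b (_ : b ∈ Finset.univ) => by rw [hdist_pair_sl b],
        Fintype.sum_prod_type]
      rfl
    have e2 : ∀ x, ∑ z, -(PX x * W₂ x z * Real.logb 2 (PX x * W₂ x z))
        = -(PX x * Real.logb 2 (PX x)) + ∑ z, -(PX x * W₂ x z * Real.logb 2 (W₂ x z)) := by
      intro x
      have e3 : ∀ z : 𝒵, -(PX x * W₂ x z * Real.logb 2 (PX x * W₂ x z))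
          = -(PX x * W₂ x z * Real.logb 2 (PX x)) +
            -(PX x * W₂ x z * Real.logb 2 (W₂ x z)) := by
        intro z
        rw [mul_mul_logb]
        ring
      rw [Finset.sum_congr rfl fun z _ => e3 z, Finset.sum_add_distrib]
      congr 1
      calc ∑ z, -(PX x * W₂ x z * Real.logb 2 (PX x))
          = -(PX x * Real.logb 2 (PX x) * ∑ z, W₂ x z) := by
            rw [Finset.mul_sum, ← Finset.sum_neg_distrib]
            exact Finset.sum_congr rfl fun z _ => by ring
        _ = -(PX x * Real.logb 2 (PX x)) := by rw [hW₂.2 x, mul_one]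
    rw [e1, Finset.sum_congr rfl fun x (_ : x ∈ Finset.univ) => e2 x,
      Finset.sum_add_distrib, hHfst, hCsl]
  have hMIsl : MI (slP PX W₂) Prod.fst Prod.snd = H (slP PX W₂) Prod.snd - Csl := by
    simp only [MI]
    linarith [hHpair_sl]
  -- the joint distribution of (X_i, Z_i) is the single-letter distribution
  have hXiMU : ∀ (i : Fin N) (x : 𝒳),
      ∑ t : (Fin K → ZMod 2) × (Fin R → ZMod 2),
        dist p (fun ω => (M ω, UR ω)) t * (if enc t.1 t.2 i = x then 1 else 0)
      = PX x := by
    intro i x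
    rw [sum_dist_mul p (fun ω => (M ω, UR ω)) (fun t => if enc t.1 t.2 i = x then 1 else 0),
      ← hmarg i x]
    unfold dist
    refine Finset.sum_congr rfl fun ω _ => ?_
    dsimp only
    simp only [hX ω]
    by_cases h : enc (M ω) (UR ω) i = x <;> simp [h]
  have hjointXZ : ∀ (i : Fin N) (x : 𝒳) (z : 𝒵),
      dist p (fun ω => (X ω i, Z ω i)) (x, z) = PX x * W₂ x z := by
    intro i x z
    have lhs_eq : dist p (fun ω => (X ω i, Z ω i)) (x, z)
        = ∑ t : (Fin K → ZMod 2) × (Fin R → ZMod 2) × (Fin N → 𝒵),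
            dist p (fun ω => (M ω, UR ω, Z ω)) t *
              (if enc t.1 t.2.1 i = x ∧ t.2.2 i = z then 1 else 0) := by
      rw [sum_dist_mul p (fun ω => (M ω, UR ω, Z ω))
          (fun t => if enc t.1 t.2.1 i = x ∧ t.2.2 i = z then 1 else 0)]
      unfold dist
      refine Finset.sum_congr rfl fun ω _ => ?_
      dsimp only
      simp only [hX ω]
      by_cases h1 : enc (M ω) (UR ω) i = x <;> by_cases h2 : Z ω i = z <;>
        simp [h1, h2, Prod.ext_iff]
    rw [lhs_eq, Fintype.sum_prod_type]
    have step : ∀ m : Fin K → ZMod 2, ∑ t : (Fin R → ZMod 2) × (Fin N → 𝒵),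
        dist p (fun ω => (M ω, UR ω, Z ω)) (m, t) *
          (if enc m t.1 i = x ∧ t.2 i = z then 1 else 0)
        = ∑ r : Fin R → ZMod 2, dist p (fun ω => (M ω, UR ω)) (m, r) *
            (if enc m r i = x then 1 else 0) * W₂ x z := by
      intro m
      rw [Fintype.sum_prod_type]
      refine Finset.sum_congr rfl fun r _ => ?_
      by_cases h : enc m r i = x
      · calc ∑ z' : Fin N → 𝒵, dist p (fun ω => (M ω, UR ω, Z ω)) (m, r, z') *
              (if enc m r i = x ∧ z' i = z then 1 else 0)
            = dist p (fun ω => (M ω, UR ω)) (m, r) *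
              ∑ z' : Fin N → 𝒵, (if z' i = z then ∏ j, W₂ (enc m r j) (z' j) else 0) := by
              rw [Finset.mul_sum]
              refine Finset.sum_congr rfl fun z' _ => ?_
              rw [hmem m r z']
              by_cases h2 : z' i = z
              · simp [h, h2]
              · simp [h2]
          _ = dist p (fun ω => (M ω, UR ω)) (m, r) * W₂ (enc m r i) z := by
              rw [sum_pi_ite (fun j => W₂ (enc m r j)) (fun j => hW₂.2 _) i z]
          _ = dist p (fun ω => (M ω, UR ω)) (m, r) *
              (if enc m r i = x then 1 else 0) * W₂ x z := by
              rw [h]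
              simp
      · simp [h]
    rw [Finset.sum_congr rfl fun m (_ : m ∈ Finset.univ) => step m]
    calc ∑ m, ∑ r, dist p (fun ω => (M ω, UR ω)) (m, r) *
          (if enc m r i = x then 1 else 0) * W₂ x z
        = (∑ t : (Fin K → ZMod 2) × (Fin R → ZMod 2),
            dist p (fun ω => (M ω, UR ω)) t * (if enc t.1 t.2 i = x then 1 else 0)) *
            W₂ x z := by
          rw [Finset.sum_mul, Fintype.sum_prod_type]
      _ = PX x * W₂ x z := by rw [hXiMU i x]
  -- N-letter conditional entropy identity
  have hcond : H p (fun ω => (M ω, UR ω, Z ω)) - H p (fun ω => (M ω, UR ω)) =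
      (N : ℝ) * Csl := by
    rw [H_eq p (fun ω => (M ω, UR ω, Z ω)), H_eq p (fun ω => (M ω, UR ω)),
      ← Finset.sum_sub_distrib]
    have hpoint : ∀ ω,
        p ω * -(Real.logb 2 (dist p (fun ω => (M ω, UR ω, Z ω)) (M ω, UR ω, Z ω))) -
          p ω * -(Real.logb 2 (dist p (fun ω => (M ω, UR ω)) (M ω, UR ω))) =
        ∑ i, p ω * -(Real.logb 2 (W₂ (X ω i) (Z ω i))) := by
      intro ω
      rcases eq_or_ne (p ω) 0 with h | h
      · simp [h]
      · have hppos : 0 < p ω := (hp0 ω).lt_of_ne (Ne.symm h)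
        have hMUZpos : 0 < dist p (fun ω => (M ω, UR ω, Z ω)) (M ω, UR ω, Z ω) :=
          lt_of_lt_of_le hppos (le_dist_self p hp0 _ ω)
        have hMUpos : 0 < dist p (fun ω => (M ω, UR ω)) (M ω, UR ω) :=
          lt_of_lt_of_le hppos (le_dist_self p hp0 _ ω)
        have hmem' := hmem (M ω) (UR ω) (Z ω)
        have hnn : 0 ≤ ∏ j, W₂ (enc (M ω) (UR ω) j) (Z ω j) :=
          Finset.prod_nonneg fun j _ => hW₂.1 _ _
        have hne : (∏ j, W₂ (enc (M ω) (UR ω) j) (Z ω j)) ≠ 0 := by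
          intro h0
          rw [hmem', h0, mul_zero] at hMUZpos
          exact lt_irrefl _ hMUZpos
        have hprodpos : 0 < ∏ j, W₂ (enc (M ω) (UR ω) j) (Z ω j) :=
          hnn.lt_of_ne (Ne.symm hne)
        have hfac : ∀ j, W₂ (enc (M ω) (UR ω) j) (Z ω j) ≠ 0 := fun j =>
          Finset.prod_ne_zero_iff.mp hprodpos.ne' j (Finset.mem_univ j)
        have hlogsplit : Real.logb 2 (dist p (fun ω => (M ω, UR ω, Z ω)) (M ω, UR ω, Z ω)) =
            Real.logb 2 (dist p (fun ω => (M ω, UR ω)) (M ω, UR ω)) +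
              ∑ j, Real.logb 2 (W₂ (enc (M ω) (UR ω) j) (Z ω j)) := by
          rw [hmem', Real.logb_mul hMUpos.ne' hprodpos.ne']
          congr 1
          rw [Real.logb, Real.log_prod (fun j _ => hfac j), Finset.sum_div]
          rfl
        simp only [hX]
        rw [hlogsplit]
        have hrhs : ∑ i, p ω * -(Real.logb 2 (W₂ (enc (M ω) (UR ω) i) (Z ω i)))
            = p ω * -(∑ j, Real.logb 2 (W₂ (enc (M ω) (UR ω) j) (Z ω j))) := by
          rw [← Finset.mul_sum, Finset.sum_neg_distrib]
        rw [hrhs]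
        ring
    rw [Finset.sum_congr rfl fun ω (_ : ω ∈ Finset.univ) => hpoint ω, Finset.sum_comm]
    have hone : ∀ i : Fin N,
        ∑ ω, p ω * -(Real.logb 2 (W₂ (X ω i) (Z ω i))) = Csl := by
      intro i
      rw [← sum_dist_mul p (fun ω => (X ω i, Z ω i))
        (fun t => -(Real.logb 2 (W₂ t.1 t.2))), Fintype.sum_prod_type, hCsl]
      refine Finset.sum_congr rfl fun x _ => Finset.sum_congr rfl fun z _ => ?_
      rw [hjointXZ i x z]
      ring
    rw [Finset.sum_congr rfl fun i (_ : i ∈ Finset.univ) => hone i, Finset.sum_const,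
      Finset.card_univ, Fintype.card_fin, nsmul_eq_mul]
  -- marginal of each output letter and subadditivity of entropy
  have hZi : ∀ i : Fin N, H p (fun ω => Z ω i) = H (slP PX W₂) Prod.snd := by
    intro i
    have hdZ : ∀ z, dist p (fun ω => Z ω i) z = dist (slP PX W₂) Prod.snd z := by
      intro z
      rw [dist_snd p (fun ω => X ω i) (fun ω => Z ω i) z, hdist_snd z]
      exact Finset.sum_congr rfl fun x _ => hjointXZ i x z
    unfold H
    exact Finset.sum_congr rfl fun z _ => by rw [hdZ z]
  have hZbound : H p Z ≤ (N : ℝ) * H (slP PX W₂) Prod.snd := by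
    calc H p Z ≤ ∑ i, H p (fun ω => Z ω i) := H_le_sum_H p hp0 hp1 Z
      _ = ∑ _i : Fin N, H (slP PX W₂) Prod.snd :=
        Finset.sum_congr rfl fun i _ => hZi i
      _ = (N : ℝ) * H (slP PX W₂) Prod.snd := by
        rw [Finset.sum_const, Finset.card_univ, Fintype.card_fin, nsmul_eq_mul]
  -- the multi-letter mutual information bound
  have hMIMU : MI p (fun ω => (M ω, UR ω)) Z ≤ (N : ℝ) * MI (slP PX W₂) Prod.fst Prod.snd := by
    calc MI p (fun ω => (M ω, UR ω)) Z
        = H p Z - (H p (fun ω => (M ω, UR ω, Z ω)) - H p (fun ω => (M ω, UR ω))) := by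
          simp only [MI]
          linarith [hperm3]
      _ = H p Z - (N : ℝ) * Csl := by rw [hcond]
      _ ≤ (N : ℝ) * H (slP PX W₂) Prod.snd - (N : ℝ) * Csl := by linarith [hZbound]
      _ = (N : ℝ) * (H (slP PX W₂) Prod.snd - Csl) := by ring
      _ = (N : ℝ) * MI (slP PX W₂) Prod.fst Prod.snd := by rw [hMIsl]
  -- conclusion
  calc MI p M Z = MI p (fun ω => (M ω, UR ω)) Z - R +
        condH p UR (fun ω => (Z ω, M ω)) := hident
    _ ≤ (N : ℝ) * MI (slP PX W₂) Prod.fst Prod.snd - R +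
        (h2 (c * 2 ^ (-((N : ℝ) ^ β'))) + c * R * 2 ^ (-((N : ℝ) ^ β'))) := by
        linarith [hMIMU, hFano]
    _ = (N : ℝ) * MI (slP PX W₂) Prod.fst Prod.snd - R +
        h2 (c * 2 ^ (-((N : ℝ) ^ β'))) + c * R * 2 ^ (-((N : ℝ) ^ β')) := by ring


end PolarWiretap

end
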